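/- If G is a finite group and N is a normal subgroup of G, and α, β are real numbers with 0 ≤ α ≤ 1 and 0 ≤ β ≤ 1 such that k(N) ≥ |N|^α and k(G/N) ≥ |G/N|^β, where k denotes the number of conjugacy classes, then k(G) > |G|^(αβ/(1+α+β)) ≥ |G|^(αβ/3). -/

import Mathlib

open Real

theorem aux0 (G : Type*) [Group G] [Finite G] (N : Subgroup G) [N.Normal] :
    Nat.card (ConjClasses (G ⧸ N)) ≤ Nat.card (ConjClasses G) := by
  apply Nat.card_le_card_of_surjective
  show Function.Surjective (ConjClasses.map (QuotientGroup.mk' N))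
  exact ConjClasses.map_surjective Quotient.mk''_surjective

theorem aux1 (G : Type*) [Group G] [Finite G] (N : Subgroup G) [N.Normal]
    (hN : Nontrivial N) :
    Nat.card (ConjClasses (G ⧸ N)) + 1 ≤ Nat.card (ConjClasses G) := by
  obtain ⟨⟨x, hxN⟩, hx1⟩ := exists_ne (1 : N)
  have hx : x ≠ 1 := by simpa [Subtype.ext_iff] using hx1
  set f : ConjClasses G → ConjClasses (G ⧸ N) := ConjClasses.map (QuotientGroup.mk' N)
  have hsurj : Function.Surjective f :=
    ConjClasses.map_surjective Quotient.mk''_surjective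
  by_contra h
  push_neg at h
  have hle : Nat.card (ConjClasses G) ≤ Nat.card (ConjClasses (G ⧸ N)) := by omega
  have hbij := hsurj.bijective_of_nat_card_le hle
  have : ConjClasses.mk (1 : G) = ConjClasses.mk x := by
    apply hbij.injective
    show ConjClasses.mk ((QuotientGroup.mk' N) 1) = ConjClasses.mk ((QuotientGroup.mk' N) x)
    simp only [QuotientGroup.mk'_apply, map_one, (QuotientGroup.eq_one_iff x).mpr hxN]
  exact hx (isConj_one_right.mp (ConjClasses.mk_eq_mk_iff_isConj.mp this))

theorem aux2 (G : Type*) [Group G] [Finite G] (N : Subgroup G) :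
    Nat.card (ConjClasses N) ≤ Nat.card (ConjClasses G) * N.index := by
  have h1 := card_comm_eq_card_conjClasses_mul_card N
  have h2 := card_comm_eq_card_conjClasses_mul_card G
  have hinj : Nat.card { p : N × N // Commute p.1 p.2 } ≤
      Nat.card { p : G × G // Commute p.1 p.2 } := by
    refine Nat.card_le_card_of_injective (fun p ↦ ⟨⟨p.1.1, p.1.2⟩, Subtype.ext_iff.mp p.2⟩) ?_
    exact fun p q h ↦ by simpa only [Subtype.ext_iff, Prod.ext_iff] using h
  have hcard : (Nat.card G) = Nat.card N * N.index := N.card_mul_index.symm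
  have hpos : 0 < Nat.card N := Nat.card_pos
  rw [h1, h2, hcard] at hinj
  have : Nat.card (ConjClasses ↥N) * Nat.card ↥N ≤
      Nat.card (ConjClasses G) * N.index * Nat.card ↥N := by
    calc Nat.card (ConjClasses ↥N) * Nat.card ↥N
        ≤ Nat.card (ConjClasses G) * (Nat.card ↥N * N.index) := hinj
      _ = Nat.card (ConjClasses G) * N.index * Nat.card ↥N := by ring
  exact Nat.le_of_mul_le_mul_right this hpos

theorem stmt0 (G : Type*) [Group G] [Finite G] [Nontrivial G]
    (N : Subgroup G) [N.Normal] (α β : ℝ)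
    (hα0 : 0 ≤ α) (hα1 : α ≤ 1) (hβ0 : 0 ≤ β) (hβ1 : β ≤ 1)
    (hN : (Nat.card (ConjClasses N) : ℝ) ≥ (Nat.card N : ℝ) ^ α)
    (hQ : (Nat.card (ConjClasses (G ⧸ N)) : ℝ) ≥ (Nat.card (G ⧸ N) : ℝ) ^ β) :
    (Nat.card (ConjClasses G) : ℝ) > (Nat.card G : ℝ) ^ (α * β / (1 + α + β)) ∧
      (Nat.card G : ℝ) ^ (α * β / (1 + α + β)) ≥ (Nat.card G : ℝ) ^ (α * β / 3) := by
  set k : ℝ := (Nat.card (ConjClasses G) : ℝ) with hk_def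
  set kN : ℝ := (Nat.card (ConjClasses N) : ℝ)
  set kQ : ℝ := (Nat.card (ConjClasses (G ⧸ N)) : ℝ)
  set m : ℝ := (Nat.card G : ℝ) with hm_def
  set n : ℝ := (Nat.card N : ℝ)
  set q : ℝ := (N.index : ℝ) with hq_def
  have hqQ : (Nat.card (G ⧸ N) : ℝ) = q := rfl
  have hm1 : (1 : ℝ) < m := by
    show (1 : ℝ) < (Nat.card G : ℝ)
    exact_mod_cast Finite.one_lt_card (α := G)
  have hm0 : (0 : ℝ) < m := by linarith
  have hn1 : (1 : ℝ) ≤ n := by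
    show (1 : ℝ) ≤ (Nat.card N : ℝ)
    exact_mod_cast Nat.card_pos (α := N)
  have hq1 : (1 : ℝ) ≤ q := by
    have h : 0 < N.index := Nat.pos_of_ne_zero N.index_ne_zero_of_finite
    show (1 : ℝ) ≤ (N.index : ℝ)
    exact_mod_cast h
  have hq0 : (0 : ℝ) < q := by linarith
  have hmnq : m = n * q := by
    show (Nat.card G : ℝ) = (Nat.card N : ℝ) * (N.index : ℝ)
    exact_mod_cast (N.card_mul_index).symm
  have hd : (0 : ℝ) < 1 + α + β := by linarith
  have hkQk : kQ ≤ k := by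
    show ((Nat.card (ConjClasses (G ⧸ N)) : ℝ)) ≤ (Nat.card (ConjClasses G) : ℝ)
    exact_mod_cast aux0 G N
  have hkNk : kN ≤ k * q := by
    show ((Nat.card (ConjClasses N) : ℝ)) ≤ (Nat.card (ConjClasses G) : ℝ) * (N.index : ℝ)
    exact_mod_cast aux2 G N
  set e : ℝ := α * β / (1 + α + β) with he_def
  have h1 : m ^ e < k := by
    by_cases hαβ : α * β = 0
    · have : m ^ e = 1 := by rw [he_def, hαβ, zero_div, Real.rpow_zero]
      rw [this]
      have : Nontrivial (ConjClasses G) := by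
        obtain ⟨g, hg⟩ := exists_ne (1 : G)
        exact ⟨ConjClasses.mk g, ConjClasses.mk 1, fun h =>
          hg (isConj_one_left.mp (ConjClasses.mk_eq_mk_iff_isConj.mp h))⟩
      show (1 : ℝ) < (Nat.card (ConjClasses G) : ℝ)
      exact_mod_cast Finite.one_lt_card (α := ConjClasses G)
    · obtain ⟨ha, hb⟩ := mul_ne_zero_iff.mp hαβ
      have hα : 0 < α := hα0.lt_of_ne (Ne.symm ha)
      have hβ : 0 < β := hβ0.lt_of_ne (Ne.symm hb)
      rcases N.bot_or_nontrivial with hbot | hnt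
      · -- N trivial : q = m
        have hqm : q = m := by
          rw [hq_def, hm_def, hbot, Subgroup.index_bot]
        have heβ : e < β := by
          rw [he_def, div_lt_iff₀ hd]
          nlinarith
        calc m ^ e < m ^ β := (Real.rpow_lt_rpow_left_iff hm1).mpr heβ
          _ = q ^ β := by rw [hqm]
          _ ≤ kQ := by rw [← hqQ]; exact hQ
          _ ≤ k := hkQk
      · have hk1 : kQ + 1 ≤ k := by
          show ((Nat.card (ConjClasses (G ⧸ N)) : ℝ)) + 1 ≤ (Nat.card (ConjClasses G) : ℝ)
          exact_mod_cast aux1 G N hnt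
        set s : ℝ := m ^ (α / (1 + α + β)) with hs_def
        have hs0 : 0 < s := Real.rpow_pos_of_pos hm0 _
        rcases le_or_gt s q with hsq | hqs
        · have hse : s ^ β = m ^ e := by
            rw [hs_def, ← Real.rpow_mul hm0.le, he_def,
              div_mul_eq_mul_div]
          calc m ^ e = s ^ β := hse.symm
            _ ≤ q ^ β := Real.rpow_le_rpow hs0.le hsq hβ0
            _ ≤ kQ := by rw [← hqQ]; exact hQ
            _ < kQ + 1 := by linarith
            _ ≤ k := hk1
        · -- q < s
          have hnα : n ^ α = m ^ α / q ^ α := by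
            have : n = m / q := by rw [hmnq]; field_simp
            rw [this, Real.div_rpow (by linarith) hq0.le]
          have hqα1 : q ^ (α + 1) = q ^ α * q := by
            rw [Real.rpow_add_one hq0.ne']
          have hstep1 : n ^ α / q = m ^ α / q ^ (α + 1) := by
            rw [hnα, hqα1, div_div]
          have hstep2 : q ^ (α + 1) < s ^ (α + 1) :=
            Real.rpow_lt_rpow hq0.le hqs (by linarith)
          have hsα1 : s ^ (α + 1) = m ^ (α / (1 + α + β) * (α + 1)) := by
            rw [hs_def, ← Real.rpow_mul hm0.le]
          have hexp : α - α / (1 + α + β) * (α + 1) = e := by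
            rw [he_def]
            field_simp
            ring
          have hme : m ^ α / s ^ (α + 1) = m ^ e := by
            rw [hsα1, ← Real.rpow_sub hm0, hexp]
          have hdiv : m ^ α / s ^ (α + 1) < m ^ α / q ^ (α + 1) :=
            div_lt_div_of_pos_left (Real.rpow_pos_of_pos hm0 α)
              (Real.rpow_pos_of_pos hq0 _) hstep2
          have hkchain : n ^ α / q ≤ k := by
            rw [div_le_iff₀ hq0]
            calc n ^ α ≤ kN := hN
              _ ≤ k * q := hkNk
          calc m ^ e = m ^ α / s ^ (α + 1) := hme.symm
            _ < m ^ α / q ^ (α + 1) := hdiv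
            _ = n ^ α / q := hstep1.symm
            _ ≤ k := hkchain
  refine ⟨h1, ?_⟩
  apply Real.rpow_le_rpow_of_exponent_le hm1.le
  apply div_le_div_of_nonneg_left (mul_nonneg hα0 hβ0) hd
  linarith
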